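/- Let r : ℝ → ℝ be locally integrable with r(u) ≥ 0 for all u, and set B(t,T) := exp(∫_t^T r(u) du). Let T0 < T1 < T2 and let T0 = t_0 < t_1 < ⋯ < t_{n1} = T1 < t_{n1+1} < ⋯ < t_{n2} = T2 be payment dates. Let s1 ≥ s2 ≥ 0 be real numbers and let τ satisfy T1 < τ ≤ T2. Then (s1 − s2)·∑_{i=0}^{n1−1} (min(τ,t_{i+1}) − min(τ,t_i))·B(t_{i+1},T2) − s2·∑_{i=n1}^{n2−1} (min(τ,t_{i+1}) − min(τ,t_i))·B(t_{i+1},T2) ≥ (s1·(T1 − T0) − s2·(T2 − T0))·B(T1,T2). -/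
import Mathlib


open MeasureTheory Finset

/-- Discrete-payment case in the proof of the No-arbitrage condition
`(T1−T0)·s(T0,T1) < (T2−T0)·s(T0,T2)`: value at `T2` of the net protection payments of the
paired strategy, for default time `T1 < τ ≤ T2`, with payment dates
`T0 = t 0 < t 1 < ⋯ < t n1 = T1 < ⋯ < t n2 = T2`. -/
theorem stmt_2
    (r : ℝ → ℝ) (hr : LocallyIntegrable r) (hr0 : ∀ u, 0 ≤ r u)
    (B : ℝ → ℝ → ℝ) (hB : ∀ t T, B t T = Real.exp (∫ u in t..T, r u))
    (T0 T1 T2 : ℝ) (h01 : T0 < T1) (h12 : T1 < T2)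
    (t : ℕ → ℝ) (n1 n2 : ℕ) (hn1 : 0 < n1) (hn12 : n1 < n2)
    (ht : ∀ i < n2, t i < t (i + 1))
    (ht0 : t 0 = T0) (htn1 : t n1 = T1) (htn2 : t n2 = T2)
    (s1 s2 : ℝ) (hs : s2 ≤ s1) (hs2 : 0 ≤ s2)
    (τ : ℝ) (hτ1 : T1 < τ) (hτ2 : τ ≤ T2) :
    (s1 * (T1 - T0) - s2 * (T2 - T0)) * B T1 T2 ≤
      (s1 - s2) * ∑ i ∈ range n1, (min τ (t (i + 1)) - min τ (t i)) * B (t (i + 1)) T2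
        - s2 * ∑ i ∈ Ico n1 n2, (min τ (t (i + 1)) - min τ (t i)) * B (t (i + 1)) T2 := by
  -- monotonicity of t
  have hmono : ∀ j, j ≤ n2 → ∀ i, i ≤ j → t i ≤ t j := by
    intro j
    induction j with
    | zero => intro _ i hi; simp [Nat.le_zero.mp hi]
    | succ k ih =>
      intro hk i hi
      by_cases h : i = k + 1
      · simp [h]
      · exact le_trans (ih (by omega) i (by omega)) (le_of_lt (ht k (by omega)))
  -- B monotone (antitone in first argument)
  have hBmono : ∀ a b : ℝ, a ≤ b → B b T2 ≤ B a T2 := by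
    intro a b hab
    rw [hB, hB]
    apply Real.exp_le_exp.mpr
    have hii : ∀ c d : ℝ, IntervalIntegrable r volume c d := fun c d =>
      intervalIntegrable_iff.mpr
        ((hr.integrableOn_isCompact isCompact_uIcc).mono_set Set.uIoc_subset_uIcc)
    have h1 := hii a b
    have h2 := hii b T2
    have := intervalIntegral.integral_add_adjacent_intervals h1 h2
    have hnn : 0 ≤ ∫ u in a..b, r u :=
      intervalIntegral.integral_nonneg hab (fun u _ => hr0 u)
    linarith
  have hBpos : 0 < B T1 T2 := by rw [hB]; exact Real.exp_pos _
  set C := B T1 T2 with hC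
  -- first sum bound
  have hS1 : (T1 - T0) * C ≤
      ∑ i ∈ range n1, (min τ (t (i + 1)) - min τ (t i)) * B (t (i + 1)) T2 := by
    have key : ∀ i ∈ range n1,
        (t (i + 1) - t i) * C ≤ (min τ (t (i + 1)) - min τ (t i)) * B (t (i + 1)) T2 := by
      intro i hi
      rw [mem_range] at hi
      have h1 : t (i + 1) ≤ T1 := htn1 ▸ hmono n1 (le_of_lt hn12) (i + 1) hi
      have h0 : t i ≤ T1 := htn1 ▸ hmono n1 (le_of_lt hn12) i (le_of_lt hi)
      rw [min_eq_right (le_of_lt (lt_of_le_of_lt h1 hτ1)),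
          min_eq_right (le_of_lt (lt_of_le_of_lt h0 hτ1))]
      have hd : 0 ≤ t (i + 1) - t i := le_of_lt (sub_pos.mpr (ht i (by omega)))
      exact mul_le_mul_of_nonneg_left (hBmono _ _ h1) hd
    calc (T1 - T0) * C = (∑ i ∈ range n1, (t (i + 1) - t i)) * C := by
          rw [Finset.sum_range_sub, ht0, htn1]
      _ = ∑ i ∈ range n1, (t (i + 1) - t i) * C := by rw [Finset.sum_mul]
      _ ≤ _ := Finset.sum_le_sum key
  -- second sum bound
  have hS2 : ∑ i ∈ Ico n1 n2, (min τ (t (i + 1)) - min τ (t i)) * B (t (i + 1)) T2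
      ≤ (T2 - T1) * C := by
    have key : ∀ i ∈ Ico n1 n2,
        (min τ (t (i + 1)) - min τ (t i)) * B (t (i + 1)) T2
          ≤ (min τ (t (i + 1)) - min τ (t i)) * C := by
      intro i hi
      rw [mem_Ico] at hi
      have h1 : T1 ≤ t (i + 1) := htn1 ▸ hmono (i + 1) (by omega) n1 (by omega)
      have hd : 0 ≤ min τ (t (i + 1)) - min τ (t i) := by
        have : t i ≤ t (i + 1) := le_of_lt (ht i hi.2)
        have := min_le_min (le_refl τ) this
        linarith
      exact mul_le_mul_of_nonneg_left (hBmono _ _ h1) hd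
    have tele : ∑ i ∈ Ico n1 n2, (min τ (t (i + 1)) - min τ (t i)) = τ - T1 := by
      rw [Finset.sum_Ico_eq_sub _ (le_of_lt hn12),
        Finset.sum_range_sub (fun k => min τ (t k)),
        Finset.sum_range_sub (fun k => min τ (t k)),
        htn1, htn2, min_eq_left hτ2, min_eq_right (le_of_lt hτ1)]
      ring
    calc _ ≤ ∑ i ∈ Ico n1 n2, (min τ (t (i + 1)) - min τ (t i)) * C :=
          Finset.sum_le_sum key
      _ = (τ - T1) * C := by rw [← Finset.sum_mul, tele]
      _ ≤ (T2 - T1) * C := by nlinarith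
  nlinarith [hS1, hS2, mul_le_mul_of_nonneg_left hS1 (sub_nonneg.mpr hs),
    mul_le_mul_of_nonneg_left hS2 hs2]
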